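/- Let V be a finite-dimensional real vector space, g a real Lie algebra, B : g → g → ℝ an invariant bilinear form (B([ξ,η],ω) + B(η,[ξ,ω]) = 0 for all ξ,η,ω ∈ g), and k, l, p natural numbers. For every alternating k-linear map u, alternating l-linear map v, and alternating p-linear map w from V to g, the identity ⟨[u ∧ v] ∧ w⟩ + (−1)^{kl} ⟨v ∧ [u ∧ w]⟩ = 0 holds as an equality of real-valued alternating (k+l+p)-linear maps on V, with all index types identified with Fin (k+l+p) along the canonical equivalences. -/

import Mathlib

open scoped TensorProduct

/-- The bilinear map `g -> g -> g` given by the Lie bracket. -/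
noncomputable def bracketBilin (g : Type*) [LieRing g] [LieAlgebra ℝ g] :
    g →ₗ[ℝ] g →ₗ[ℝ] g :=
  LinearMap.mk₂ ℝ (fun ξ η : g => ⁅ξ, η⁆)
    (fun _ _ _ => add_lie _ _ _)
    (fun _ _ _ => smul_lie _ _ _)
    (fun _ _ _ => lie_add _ _ _)
    (fun _ _ _ => lie_smul _ _ _)

/-- The bracket-wedge `[u ∧ v]` of Lie algebra-valued alternating forms, obtained by
composing the linear map induced by the Lie bracket with the domain coproduct
`u.domCoprod v`, reindexed from `Fin k ⊕ Fin l` to `Fin (k + l)` along the canonical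
equivalence. -/
noncomputable def bwedge {V g : Type*} [AddCommGroup V] [Module ℝ V]
    [LieRing g] [LieAlgebra ℝ g] {k l : ℕ}
    (u : AlternatingMap ℝ V g (Fin k)) (v : AlternatingMap ℝ V g (Fin l)) :
    AlternatingMap ℝ V g (Fin (k + l)) :=
  ((TensorProduct.lift (bracketBilin g)).compAlternatingMap
    (u.domCoprod v)).domDomCongr finSumFinEquiv

/-- The pairing-wedge `⟨u ∧ v⟩` of Lie algebra-valued alternating forms with respect
to a bilinear form `B`, obtained by composing `B` (viewed as a linear map
`g ⊗ g → ℝ`) with the domain coproduct `u.domCoprod v`, reindexed from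
`Fin k ⊕ Fin l` to `Fin (k + l)` along the canonical equivalence. -/
noncomputable def pwedge {V g : Type*} [AddCommGroup V] [Module ℝ V]
    [LieRing g] [LieAlgebra ℝ g] (B : g →ₗ[ℝ] g →ₗ[ℝ] ℝ) {k l : ℕ}
    (u : AlternatingMap ℝ V g (Fin k)) (v : AlternatingMap ℝ V g (Fin l)) :
    AlternatingMap ℝ V ℝ (Fin (k + l)) :=
  ((TensorProduct.lift B).compAlternatingMap
    (u.domCoprod v)).domDomCongr finSumFinEquiv

section Aux

/-- The block swap permutation on `Fin (a + b)`, sending `x < a` to `b + x` and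
`x ≥ a` to `x - a`. -/
def blockSwap (a b : ℕ) : Equiv.Perm (Fin (a + b)) :=
  finAddFlip.trans (finCongr (Nat.add_comm b a))

theorem blockSwap_apply_lt {a b : ℕ} {j : Fin (a + b)} (h : (j : ℕ) < a) :
    (blockSwap a b j : ℕ) = b + (j : ℕ) := by
  rcases j with ⟨j, hj⟩
  simp [blockSwap, finAddFlip_apply_mk_left h]

theorem blockSwap_apply_ge {a b : ℕ} {j : Fin (a + b)} (h : a ≤ (j : ℕ)) :
    (blockSwap a b j : ℕ) = (j : ℕ) - a := by
  rcases j with ⟨j, hj⟩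
  simp [blockSwap, finAddFlip_apply_mk_right h hj]

open Fin.NatCast Fin.CommRing in
theorem finRotate_pow_apply (m b : ℕ) (j : Fin (m + 1)) :
    ((finRotate (m + 1)) ^ b) j = j + (b : Fin (m + 1)) := by
  induction b generalizing j with
  | zero => simp
  | succ n ih =>
    rw [pow_succ, Equiv.Perm.mul_apply, finRotate_succ_apply, ih]
    push_cast
    ring

theorem sign_blockSwap (a b : ℕ) :
    Equiv.Perm.sign (blockSwap a b) = (-1) ^ (a * b) := by
  cases b with
  | zero =>
    have h : blockSwap a 0 = Equiv.refl _ := by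
      apply Equiv.ext
      intro j
      apply Fin.ext
      rw [blockSwap_apply_lt j.2]
      simp
    rw [h]
    simp
  | succ c =>
    have h : a + c + 1 = a + (c + 1) := by omega
    have hkey : blockSwap a (c + 1)
        = (finCongr h).permCongr ((finRotate (a + c + 1)) ^ (c + 1)) := by
      apply Equiv.ext
      intro j
      apply Fin.ext
      rw [Equiv.permCongr_apply]
      have hr := finRotate_pow_apply (a + c) (c + 1) ((finCongr h).symm j)
      rw [hr]
      simp only [finCongr_apply, finCongr_symm, Fin.coe_cast, Fin.add_def,
        Fin.val_natCast, Nat.add_mod_mod]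
      rcases lt_or_ge (j : ℕ) a with hlt | hge
      · rw [blockSwap_apply_lt hlt, Nat.mod_eq_of_lt (by omega)]
        omega
      · rw [blockSwap_apply_ge hge, Nat.mod_eq_sub_mod (by omega),
          Nat.mod_eq_of_lt (by omega)]
        omega
    rw [hkey, Equiv.Perm.sign_permCongr, map_pow]
    have hs := sign_finRotate (a + c + 1)
    rw [Nat.add_sub_cancel] at hs
    rw [hs, ← pow_mul]
    have h2 : (a + c) * (c + 1) = a * (c + 1) + c * (c + 1) := by ring
    rw [h2, pow_add, Even.neg_one_pow (Nat.even_mul_succ_self c), mul_one]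

theorem alternatization_domDomCongr {V N : Type*} [AddCommGroup V] [Module ℝ V]
    [AddCommGroup N] [Module ℝ N] {ι ι' : Type*} [Fintype ι] [DecidableEq ι]
    [Fintype ι'] [DecidableEq ι'] (e : ι ≃ ι')
    (m : MultilinearMap ℝ (fun _ : ι => V) N) :
    (MultilinearMap.alternatization m).domDomCongr e
      = MultilinearMap.alternatization (m.domDomCongr e) := by
  ext v
  rw [AlternatingMap.domDomCongr_apply, MultilinearMap.alternatization_apply,
    MultilinearMap.alternatization_apply]
  refine Fintype.sum_equiv e.permCongr _ _ fun π => ?_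
  rw [Equiv.Perm.sign_permCongr]
  congr 1
  simp only [MultilinearMap.domDomCongr_apply]
  congr 1
  funext i
  simp [Equiv.permCongr_apply, Function.comp]

theorem domCoprod_smul_left {V N₁ N₂ : Type*} [AddCommGroup V] [Module ℝ V]
    [AddCommGroup N₁] [Module ℝ N₁] [AddCommGroup N₂] [Module ℝ N₂]
    {ιa ιb : Type*} [Fintype ιa] [Fintype ιb] [DecidableEq ιa] [DecidableEq ιb]
    (c : ℝ) (a : AlternatingMap ℝ V N₁ ιa) (b : AlternatingMap ℝ V N₂ ιb) :
    (c • a).domCoprod b = c • a.domCoprod b := by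
  rw [← AlternatingMap.domCoprod'_apply, ← AlternatingMap.domCoprod'_apply,
    ← TensorProduct.smul_tmul', LinearMap.map_smul]

theorem domCoprod_smul_right {V N₁ N₂ : Type*} [AddCommGroup V] [Module ℝ V]
    [AddCommGroup N₁] [Module ℝ N₁] [AddCommGroup N₂] [Module ℝ N₂]
    {ιa ιb : Type*} [Fintype ιa] [Fintype ιb] [DecidableEq ιa] [DecidableEq ιb]
    (c : ℝ) (a : AlternatingMap ℝ V N₁ ιa) (b : AlternatingMap ℝ V N₂ ιb) :
    a.domCoprod (c • b) = c • a.domCoprod b := by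
  rw [← AlternatingMap.domCoprod'_apply, ← AlternatingMap.domCoprod'_apply,
    TensorProduct.tmul_smul, LinearMap.map_smul]

end Aux

/-- For an invariant bilinear form `B`, the identity
`⟨[u ∧ v] ∧ w⟩ + (-1)^(k*l) ⟨v ∧ [u ∧ w]⟩ = 0` holds, with all index types
identified with `Fin (k + l + p)` along the canonical equivalences. -/
theorem pwedge_bwedge_invariance {V g : Type*} [AddCommGroup V] [Module ℝ V]
    [FiniteDimensional ℝ V] [LieRing g] [LieAlgebra ℝ g]
    (B : g →ₗ[ℝ] g →ₗ[ℝ] ℝ)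
    (hB : ∀ ξ η ω : g, B ⁅ξ, η⁆ ω + B η ⁅ξ, ω⁆ = 0) {k l p : ℕ}
    (u : AlternatingMap ℝ V g (Fin k)) (v : AlternatingMap ℝ V g (Fin l))
    (w : AlternatingMap ℝ V g (Fin p)) :
    pwedge B (bwedge u v) w +
      ((-1 : ℝ) ^ (k * l)) •
        ((pwedge B v (bwedge u w)).domDomCongr
          (finCongr (by omega : l + (k + p) = k + l + p))) = 0 := by
  classical
  have hlkp : l + k + p = k + l + p := by omega
  have hcast : l + (k + p) = k + l + p := by omega
  have hk0 : ((k.factorial : ℝ)) ≠ 0 := Nat.cast_ne_zero.mpr k.factorial_ne_zero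
  have hl0 : ((l.factorial : ℝ)) ≠ 0 := Nat.cast_ne_zero.mpr l.factorial_ne_zero
  have hp0 : ((p.factorial : ℝ)) ≠ 0 := Nat.cast_ne_zero.mpr p.factorial_ne_zero
  set Bl := TensorProduct.lift B with hBl
  set Br := TensorProduct.lift (bracketBilin g) with hBr
  set Muv : MultilinearMap ℝ (fun _ : Fin (k + l) => V) g :=
    (Br.compMultilinearMap (MultilinearMap.domCoprod ↑u ↑v)).domDomCongr
      finSumFinEquiv with hMuv
  set Muw : MultilinearMap ℝ (fun _ : Fin (k + p) => V) g :=
    (Br.compMultilinearMap (MultilinearMap.domCoprod ↑u ↑w)).domDomCongr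
      finSumFinEquiv with hMuw
  set P₁ : MultilinearMap ℝ (fun _ : Fin (k + l + p) => V) ℝ :=
    (Bl.compMultilinearMap (MultilinearMap.domCoprod Muv ↑w)).domDomCongr
      finSumFinEquiv with hP₁
  set P₂ : MultilinearMap ℝ (fun _ : Fin (l + (k + p)) => V) ℝ :=
    (Bl.compMultilinearMap (MultilinearMap.domCoprod ↑v Muw)).domDomCongr
      finSumFinEquiv with hP₂
  -- Step 1: express the bracket-wedges through alternatizations
  have hbuv : bwedge u v
      = ((k.factorial : ℝ) * l.factorial)⁻¹ • MultilinearMap.alternatization Muv := by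
    have h := MultilinearMap.domCoprod_alternization_eq u v
    rw [Fintype.card_fin, Fintype.card_fin] at h
    have h2 : u.domCoprod v = ((k.factorial : ℝ) * l.factorial)⁻¹ •
        MultilinearMap.alternatization
          (MultilinearMap.domCoprod (↑u) (↑v) :
            MultilinearMap ℝ (fun _ : Fin k ⊕ Fin l => V) (g ⊗[ℝ] g)) := by
      rw [h, ← Nat.cast_smul_eq_nsmul ℝ, Nat.cast_mul,
        inv_smul_smul₀ (mul_ne_zero hk0 hl0)]
    simp only [bwedge]
    rw [← hBr, h2, LinearMap.compAlternatingMap_smul, AlternatingMap.domDomCongr_smul,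
      ← LinearMap.compMultilinearMap_alternatization, alternatization_domDomCongr,
      ← hMuv]
  have hbuw : bwedge u w
      = ((k.factorial : ℝ) * p.factorial)⁻¹ • MultilinearMap.alternatization Muw := by
    have h := MultilinearMap.domCoprod_alternization_eq u w
    rw [Fintype.card_fin, Fintype.card_fin] at h
    have h2 : u.domCoprod w = ((k.factorial : ℝ) * p.factorial)⁻¹ •
        MultilinearMap.alternatization
          (MultilinearMap.domCoprod (↑u) (↑w) :
            MultilinearMap ℝ (fun _ : Fin k ⊕ Fin p => V) (g ⊗[ℝ] g)) := by
      rw [h, ← Nat.cast_smul_eq_nsmul ℝ, Nat.cast_mul,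
        inv_smul_smul₀ (mul_ne_zero hk0 hp0)]
    simp only [bwedge]
    rw [← hBr, h2, LinearMap.compAlternatingMap_smul, AlternatingMap.domDomCongr_smul,
      ← LinearMap.compMultilinearMap_alternatization, alternatization_domDomCongr,
      ← hMuw]
  have hw' : ((p.factorial : ℝ))⁻¹ • MultilinearMap.alternatization
      (↑w : MultilinearMap ℝ (fun _ : Fin p => V) g) = w := by
    rw [AlternatingMap.coe_alternatization, Fintype.card_fin,
      ← Nat.cast_smul_eq_nsmul ℝ, inv_smul_smul₀ hp0]
  have hv' : ((l.factorial : ℝ))⁻¹ • MultilinearMap.alternatization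
      (↑v : MultilinearMap ℝ (fun _ : Fin l => V) g) = v := by
    rw [AlternatingMap.coe_alternatization, Fintype.card_fin,
      ← Nat.cast_smul_eq_nsmul ℝ, inv_smul_smul₀ hl0]
  -- Step 2: express the two pairing-wedges through alternatizations
  have stepA : pwedge B (bwedge u v) w
      = (((k.factorial : ℝ) * l.factorial)⁻¹ * (p.factorial : ℝ)⁻¹) •
          MultilinearMap.alternatization P₁ := by
    simp only [pwedge]
    rw [← hBl, hbuv, domCoprod_smul_left, ← hw', domCoprod_smul_right,
      ← MultilinearMap.domCoprod_alternization,
      LinearMap.compAlternatingMap_smul, LinearMap.compAlternatingMap_smul,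
      AlternatingMap.domDomCongr_smul, AlternatingMap.domDomCongr_smul,
      ← LinearMap.compMultilinearMap_alternatization, alternatization_domDomCongr,
      ← hP₁, smul_smul]
  have stepB : pwedge B v (bwedge u w)
      = (((k.factorial : ℝ) * p.factorial)⁻¹ * (l.factorial : ℝ)⁻¹) •
          MultilinearMap.alternatization P₂ := by
    simp only [pwedge]
    rw [← hBl, hbuw, domCoprod_smul_right, ← hv', domCoprod_smul_left,
      ← MultilinearMap.domCoprod_alternization,
      LinearMap.compAlternatingMap_smul, LinearMap.compAlternatingMap_smul,
      AlternatingMap.domDomCongr_smul, AlternatingMap.domDomCongr_smul,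
      ← LinearMap.compMultilinearMap_alternatization, alternatization_domDomCongr,
      ← hP₂, smul_smul]
  -- Step 3: the block swap permutation
  set E : Fin (l + k) ⊕ Fin p ≃ Fin (k + l + p) :=
    finSumFinEquiv.trans (finCongr hlkp) with hE
  set σ' : Equiv.Perm (Fin (k + l + p)) :=
    E.permCongr (Equiv.sumCongr (blockSwap l k) (Equiv.refl (Fin p))) with hσ'
  have hsign : Equiv.Perm.sign σ' = (-1 : ℤˣ) ^ (k * l) := by
    rw [hσ', Equiv.Perm.sign_permCongr, Equiv.Perm.sign_sumCongr, sign_blockSwap,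
      Equiv.Perm.sign_refl, mul_one, mul_comm l k]
  have hEl : ∀ y : Fin (l + k), σ' (E (Sum.inl y)) = E (Sum.inl (blockSwap l k y)) := by
    intro y
    simp [hσ', Equiv.permCongr_apply]
  have hEr : ∀ y : Fin p, σ' (E (Sum.inr y)) = E (Sum.inr y) := by
    intro y
    simp [hσ', Equiv.permCongr_apply]
  have hElv : ∀ y : Fin (l + k), ((E (Sum.inl y)) : ℕ) = (y : ℕ) := by
    intro y
    simp [hE]
  have hErv : ∀ y : Fin p, ((E (Sum.inr y)) : ℕ) = l + k + (y : ℕ) := by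
    intro y
    simp [hE]
    omega
  -- Step 4: the key index identities
  have key_u : ∀ j : Fin k,
      σ' (finCongr hcast (finSumFinEquiv (Sum.inr
          ((finSumFinEquiv (Sum.inl j) : Fin (k + p))))))
        = finSumFinEquiv (Sum.inl ((finSumFinEquiv (Sum.inl j) : Fin (k + l)))) := by
    intro j
    have h1 : finCongr hcast (finSumFinEquiv (Sum.inr
        ((finSumFinEquiv (Sum.inl j) : Fin (k + p)))))
        = E (Sum.inl (Fin.natAdd l j)) := by
      apply Fin.ext
      simp [hE]
    rw [h1, hEl]
    apply Fin.ext
    rw [hElv, blockSwap_apply_ge (by simp)]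
    simp
  have key_v : ∀ j : Fin l,
      σ' (finCongr hcast (finSumFinEquiv (Sum.inl j)))
        = finSumFinEquiv (Sum.inl ((finSumFinEquiv (Sum.inr j) : Fin (k + l)))) := by
    intro j
    have h1 : finCongr hcast (finSumFinEquiv (Sum.inl j))
        = E (Sum.inl (Fin.castAdd k j)) := by
      apply Fin.ext
      simp [hE]
    rw [h1, hEl]
    apply Fin.ext
    rw [hElv, blockSwap_apply_lt (by simp)]
    simp
  have key_w : ∀ j : Fin p,
      σ' (finCongr hcast (finSumFinEquiv (Sum.inr
          ((finSumFinEquiv (Sum.inr j) : Fin (k + p))))))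
        = finSumFinEquiv (Sum.inr j) := by
    intro j
    have h1 : finCongr hcast (finSumFinEquiv (Sum.inr
        ((finSumFinEquiv (Sum.inr j) : Fin (k + p)))))
        = E (Sum.inr j) := by
      apply Fin.ext
      simp [hE]
      omega
    rw [h1, hEr]
    apply Fin.ext
    rw [hErv]
    simp
    omega
  -- Step 5: the pointwise identity from invariance of B
  have claimC : P₁ = - ((P₂.domDomCongr (finCongr hcast)).domDomCongr
      (σ' : Fin (k + l + p) ≃ Fin (k + l + p))) := by
    ext x
    simp only [hP₁, hP₂, hMuv, hMuw, MultilinearMap.domDomCongr_apply,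
      LinearMap.compMultilinearMap_apply, MultilinearMap.domCoprod_apply,
      MultilinearMap.neg_apply, hBl, hBr, TensorProduct.lift.tmul, bracketBilin,
      LinearMap.mk₂_apply, AlternatingMap.coe_multilinearMap]
    have e_u : (fun i : Fin k => x (σ' (finCongr hcast (finSumFinEquiv (Sum.inr
          ((finSumFinEquiv (Sum.inl i) : Fin (k + p))))))))
        = fun i : Fin k => x (finSumFinEquiv (Sum.inl
            ((finSumFinEquiv (Sum.inl i) : Fin (k + l))))) := by
      funext i
      rw [key_u]
    have e_v : (fun i : Fin l => x (σ' (finCongr hcast (finSumFinEquiv (Sum.inl i)))))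
        = fun i : Fin l => x (finSumFinEquiv (Sum.inl
            ((finSumFinEquiv (Sum.inr i) : Fin (k + l))))) := by
      funext i
      rw [key_v]
    have e_w : (fun i : Fin p => x (σ' (finCongr hcast (finSumFinEquiv (Sum.inr
          ((finSumFinEquiv (Sum.inr i) : Fin (k + p))))))))
        = fun i : Fin p => x (finSumFinEquiv (Sum.inr i)) := by
      funext i
      rw [key_w]
    rw [e_u, e_v, e_w]
    have h := hB (u fun i : Fin k => x (finSumFinEquiv (Sum.inl
        ((finSumFinEquiv (Sum.inl i) : Fin (k + l))))))
      (v fun i : Fin l => x (finSumFinEquiv (Sum.inl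
        ((finSumFinEquiv (Sum.inr i) : Fin (k + l))))))
      (w fun i : Fin p => x (finSumFinEquiv (Sum.inr i)))
    linarith
  -- Step 6: conclude
  have halt : MultilinearMap.alternatization P₁
      = (-((-1 : ℝ) ^ (k * l))) •
          MultilinearMap.alternatization (P₂.domDomCongr (finCongr hcast)) := by
    rw [claimC, map_neg, ← alternatization_domDomCongr,
      AlternatingMap.domDomCongr_perm, hsign, Units.smul_def,
      ← Int.cast_smul_eq_zsmul ℝ]
    push_cast
    exact (neg_smul _ _).symm
  rw [stepA, stepB, AlternatingMap.domDomCongr_smul, alternatization_domDomCongr,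
    halt, smul_smul, smul_smul, ← add_smul]
  have hscal : ((k.factorial : ℝ) * l.factorial)⁻¹ * (p.factorial : ℝ)⁻¹ *
        (-((-1 : ℝ) ^ (k * l))) +
      (-1 : ℝ) ^ (k * l) * (((k.factorial : ℝ) * p.factorial)⁻¹ * (l.factorial : ℝ)⁻¹)
      = 0 := by
    rw [mul_inv, mul_inv]
    ring
  rw [hscal, zero_smul]
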